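/- Let (V; M0,...,M4; c) be a Higmanian matrix configuration with valencies ni = c(i,i,0), and fix i ∈ {3,4}. Suppose there exist a symmetric {0,1}-matrix P with all diagonal entries 1, a natural number n' with P^2 = n'•P, and natural numbers λ1, λ2 such that (M2+Mi)^2 = (n2+ni)•I + λ1•(P−I) + λ2•(J−P); that is, M2+Mi is the adjacency matrix of a divisible design graph for some equal-class-size partition of V. Then c(3,3,3) = c(3,3,4), and at least one of the following holds (as equalities of rational numbers): (1) 1/n3 + 1/n4 = 1/n1 − 1/(n1+1), or (2) n2/(n1+1) − 2·ni/n_{7−i} = 1. -/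

import Mathlib

open Matrix Finset

/-- A *Higmanian matrix configuration* on a nonempty finite set `V`:
five nonzero symmetric `{0,1}`-matrices `M 0, …, M 4` over `ℤ` summing to the all-ones
matrix, with `M 0 = I`, structure constants `c`, parabolic conditions for
`N0 = M0 + M1` and `N1 = M0 + M1 + M2`, standard ordering `n3 ≤ n4`, and triviality of
the radicals of `M 3` and `M 4`. -/
structure HigmanianConfig (V : Type*) [Fintype V] [DecidableEq V] : Type _ where
  nonempty : Nonempty V
  M : Fin 5 → Matrix V V ℤ
  c : Fin 5 → Fin 5 → Fin 5 → ℕ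
  M_ne_zero : ∀ i, M i ≠ 0
  M_symm : ∀ i, (M i)ᵀ = M i
  M_entries : ∀ i x y, M i x y = 0 ∨ M i x y = 1
  M_zero : M 0 = 1
  sum_M : M 0 + M 1 + M 2 + M 3 + M 4 = Matrix.of fun _ _ => 1
  mul_M : ∀ i j, M i * M j = ∑ k : Fin 5, (c i j k : ℤ) • M k
  N0_sq : (M 0 + M 1) * (M 0 + M 1) = ((1 + c 1 1 0 : ℕ) : ℤ) • (M 0 + M 1)
  N1_sq : (M 0 + M 1 + M 2) * (M 0 + M 1 + M 2)
      = ((1 + c 1 1 0 + c 2 2 0 : ℕ) : ℤ) • (M 0 + M 1 + M 2)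
  N1_ne_J : M 0 + M 1 + M 2 ≠ Matrix.of fun _ _ => 1
  n3_le_n4 : c 3 3 0 ≤ c 4 4 0
  radical : ∀ j ∈ ({3, 4} : Finset (Fin 5)), ∀ T : Finset (Fin 5),
    T.Nonempty → T ⊆ ({1, 2, 3, 4} : Finset (Fin 5)) →
    ¬ ((1 + ∑ t ∈ T, M t) * (1 + ∑ t ∈ T, M t)
          = (1 + ∑ t ∈ T, (c t t 0 : ℤ)) • (1 + ∑ t ∈ T, M t)
        ∧ (1 + ∑ t ∈ T, M t) * M j = (1 + ∑ t ∈ T, (c t t 0 : ℤ)) • M j)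

/-- The valency `nᵢ = c i i 0` of the `i`-th basis matrix. -/
def HigmanianConfig.n {V : Type*} [Fintype V] [DecidableEq V]
    (X : HigmanianConfig V) (i : Fin 5) : ℕ := X.c i i 0


set_option linter.unusedSectionVars false

namespace HigmanianConfig

variable {V : Type*} [Fintype V] [DecidableEq V] (X : HigmanianConfig V)

section Helpers

variable {A : Matrix V V ℤ} {k : ℤ}

lemma equiv_symm_apply (hsymm : Aᵀ = A) (x y : V) : A y x = A x y := by
  calc A y x = Aᵀ x y := (Matrix.transpose_apply A x y).symm
  _ = A x y := by rw [hsymm]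

/-- transitivity for "equivalence-like" matrices -/
lemma equiv_trans (h01 : ∀ x y, A x y = 0 ∨ A x y = 1) (hsq : A * A = k • A)
    {x y z : V} (hxy : A x y = 1) (hyz : A y z = 1) : A x z = 1 := by
  have h1 : (A * A) x z = ∑ w, A x w * A w z := Matrix.mul_apply
  have h2 : (1 : ℤ) ≤ ∑ w, A x w * A w z := by
    have : A x y * A y z = 1 := by rw [hxy, hyz]; ring
    calc (1:ℤ) = A x y * A y z := this.symm
    _ ≤ ∑ w, A x w * A w z := by
        apply Finset.single_le_sum (f := fun w => A x w * A w z) _ (Finset.mem_univ y)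
        intro w _
        rcases h01 x w with h | h <;> rcases h01 w z with h' | h' <;> simp [h, h']
  rcases h01 x z with h | h
  · exfalso
    have : (k • A) x z = 0 := by simp [Matrix.smul_apply, h]
    rw [← hsq, h1] at this
    omega
  · exact h

lemma equiv_rowsum (h01 : ∀ x y, A x y = 0 ∨ A x y = 1) (hsymm : Aᵀ = A)
    (hdiag : ∀ x, A x x = 1) (hsq : A * A = k • A) (x : V) :
    ∑ y, A x y = k := by
  have h1 : (A * A) x x = ∑ w, A x w * A w x := Matrix.mul_apply
  have h2 : (A * A) x x = k := by rw [hsq]; simp [Matrix.smul_apply, hdiag]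
  have h3 : ∀ w, A x w * A w x = A x w := by
    intro w
    have hs : A w x = A x w := equiv_symm_apply hsymm x w
    rcases h01 x w with h | h <;> rw [hs, h] <;> ring
  rw [h1, Finset.sum_congr rfl (fun w _ => h3 w)] at h2
  exact h2

/-- rows of an equivalence-like matrix at related points agree -/
lemma equiv_rows_eq (h01 : ∀ x y, A x y = 0 ∨ A x y = 1) (hsymm : Aᵀ = A)
    (hsq : A * A = k • A) {x z : V} (hxz : A x z = 1) (w : V) :
    A z w = A x w := by
  have hzx : A z x = 1 := by rw [equiv_symm_apply hsymm]; exact hxz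
  rcases h01 z w with h | h
  · rcases h01 x w with h' | h'
    · rw [h, h']
    · exfalso; have := equiv_trans h01 hsq hzx h'; omega
  · rcases h01 x w with h' | h'
    · exfalso; have := equiv_trans h01 hsq hxz h; omega
    · rw [h, h']

end Helpers

section Basic

lemma e01 (t : Fin 5) (x y : V) : X.M t x y = 0 ∨ X.M t x y = 1 := X.M_entries t x y

lemma entry_nonneg (t : Fin 5) (x y : V) : 0 ≤ X.M t x y := by
  rcases X.e01 t x y with h | h <;> omega

lemma sum5 (x y : V) :
    X.M 0 x y + X.M 1 x y + X.M 2 x y + X.M 3 x y + X.M 4 x y = 1 := by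
  have := congrFun (congrFun X.sum_M x) y
  simpa [Matrix.add_apply] using this

/-- entries of distinct relations are disjoint -/
lemma disj {t u : Fin 5} {x y : V} (h : X.M t x y = 1) (hu : u ≠ t) : X.M u x y = 0 := by
  have hs := X.sum5 x y
  have h0 := X.e01 0 x y; have h1 := X.e01 1 x y; have h2 := X.e01 2 x y
  have h3 := X.e01 3 x y; have h4 := X.e01 4 x y
  fin_cases t <;> fin_cases u <;> simp_all <;> omega

lemma M0_diag (x : V) : X.M 0 x x = 1 := by rw [X.M_zero]; simp

lemma M0_offdiag {x y : V} (h : x ≠ y) : X.M 0 x y = 0 := by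
  rw [X.M_zero]; simp [Matrix.one_apply, h]

lemma diag0 {t : Fin 5} (ht : t ≠ 0) (x : V) : X.M t x x = 0 :=
  X.disj (X.M0_diag x) ht

lemma ne_of_entry {t : Fin 5} (ht : t ≠ 0) {x y : V} (h : X.M t x y = 1) : x ≠ y := by
  rintro rfl; have := X.diag0 ht x; omega

/-- evaluate a product at a pair in relation `k` -/
lemma mul_apply_rel (t u : Fin 5) {k : Fin 5} {x y : V} (h : X.M k x y = 1) :
    (X.M t * X.M u) x y = (X.c t u k : ℤ) := by
  rw [X.mul_M t u]
  have : ∀ l : Fin 5, (X.c t u l : ℤ) * X.M l x y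
      = if l = k then (X.c t u k : ℤ) else 0 := by
    intro l
    by_cases hl : l = k
    · subst hl; rw [h]; simp
    · rw [X.disj h hl]; simp [hl]
  calc (∑ l : Fin 5, (X.c t u l : ℤ) • X.M l) x y
      = ∑ l : Fin 5, ((X.c t u l : ℤ) • X.M l) x y := Matrix.sum_apply x y _ _
  _ = ∑ l : Fin 5, (X.c t u l : ℤ) * X.M l x y := by
        refine Finset.sum_congr rfl (fun l _ => ?_)
        rw [Matrix.smul_apply, smul_eq_mul]
  _ = ∑ l : Fin 5, if l = k then (X.c t u k : ℤ) else 0 :=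
        Finset.sum_congr rfl (fun l _ => this l)
  _ = (X.c t u k : ℤ) := by simp

lemma rowsum (t : Fin 5) (x : V) : ∑ y, X.M t x y = (X.c t t 0 : ℤ) := by
  have h1 : (X.M t * X.M t) x x = (X.c t t 0 : ℤ) := X.mul_apply_rel t t (X.M0_diag x)
  have h2 : (X.M t * X.M t) x x = ∑ y, X.M t x y * X.M t y x := Matrix.mul_apply
  have h3 : ∀ y : V, X.M t x y * X.M t y x = X.M t x y := by
    intro y
    have hs : X.M t y x = X.M t x y := equiv_symm_apply (X.M_symm t) x y
    rcases X.e01 t x y with h | h <;> rw [hs, h] <;> ring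
  rw [h2, Finset.sum_congr rfl (fun y _ => h3 y)] at h1
  exact h1

lemma exists_pair (t : Fin 5) : ∃ x y, X.M t x y = 1 := by
  by_contra h
  push_neg at h
  apply X.M_ne_zero t
  ext x y
  rcases X.e01 t x y with h' | h'
  · simpa using h'
  · exact absurd h' (h x y)

lemma npos (t : Fin 5) : (0 : ℤ) < (X.c t t 0 : ℤ) := by
  obtain ⟨x, y, h1⟩ := X.exists_pair t
  have := X.rowsum t x
  have hle : (1:ℤ) ≤ ∑ y', X.M t x y' := by
    calc (1:ℤ) = X.M t x y := h1.symm
    _ ≤ ∑ y', X.M t x y' :=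
        Finset.single_le_sum (fun w _ => X.entry_nonneg t x w) (Finset.mem_univ y)
  omega

lemma exists_nbr (t : Fin 5) (x : V) : ∃ y, X.M t x y = 1 := by
  by_contra h
  push_neg at h
  have h0 : ∀ y, X.M t x y = 0 := by
    intro y
    rcases X.e01 t x y with h' | h'
    · exact h'
    · exact absurd h' (h y)
  have := X.rowsum t x
  rw [Finset.sum_congr rfl (fun y _ => h0 y)] at this
  simp at this
  have := X.npos t
  omega

end Basic

section Parabolic

/-- the smaller parabolic `N0 = I + M1` -/
def N0 : Matrix V V ℤ := X.M 0 + X.M 1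

/-- the larger parabolic `N1 = I + M1 + M2` -/
def N1 : Matrix V V ℤ := X.M 0 + X.M 1 + X.M 2

lemma N0_apply (x y : V) : X.N0 x y = X.M 0 x y + X.M 1 x y := rfl

lemma N1_apply (x y : V) : X.N1 x y = X.M 0 x y + X.M 1 x y + X.M 2 x y := rfl

lemma N0_01 (x y : V) : X.N0 x y = 0 ∨ X.N0 x y = 1 := by
  rw [N0_apply]
  rcases X.e01 0 x y with h0 | h0 <;> rcases X.e01 1 x y with h1 | h1
  · left; omega
  · right; omega
  · right; omega
  · exfalso; have := X.disj h1 (by decide : (0 : Fin 5) ≠ 1); omega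

lemma N1_01 (x y : V) : X.N1 x y = 0 ∨ X.N1 x y = 1 := by
  rw [N1_apply]
  rcases X.e01 0 x y with h0 | h0 <;> rcases X.e01 1 x y with h1 | h1 <;>
    rcases X.e01 2 x y with h2 | h2 <;>
    [skip; skip; skip; skip; skip; skip; skip; skip] <;>
  first
    | (left; omega)
    | (right; omega)
    | (exfalso;
       first
         | (have := X.disj h1 (by decide : (0 : Fin 5) ≠ 1); omega)
         | (have := X.disj h2 (by decide : (0 : Fin 5) ≠ 2); omega)
         | (have := X.disj h2 (by decide : (1 : Fin 5) ≠ 2); omega))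

lemma N0_diag (x : V) : X.N0 x x = 1 := by
  rw [N0_apply, X.M0_diag, X.diag0 (by decide : (1:Fin 5) ≠ 0)]; ring

lemma N1_diag (x : V) : X.N1 x x = 1 := by
  rw [N1_apply, X.M0_diag, X.diag0 (by decide : (1:Fin 5) ≠ 0),
    X.diag0 (by decide : (2:Fin 5) ≠ 0)]; ring

lemma N0_symm : (X.N0)ᵀ = X.N0 := by
  rw [N0, Matrix.transpose_add, X.M_symm, X.M_symm]

lemma N1_symm : (X.N1)ᵀ = X.N1 := by
  rw [N1, Matrix.transpose_add, Matrix.transpose_add, X.M_symm, X.M_symm, X.M_symm]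

lemma N0_sq' : X.N0 * X.N0 = (1 + (X.c 1 1 0 : ℤ)) • X.N0 := by
  have := X.N0_sq
  rw [show ((1 + X.c 1 1 0 : ℕ) : ℤ) = 1 + (X.c 1 1 0 : ℤ) by push_cast; ring] at this
  exact this

lemma N1_sq' : X.N1 * X.N1 = (1 + (X.c 1 1 0 : ℤ) + (X.c 2 2 0 : ℤ)) • X.N1 := by
  have := X.N1_sq
  rw [show ((1 + X.c 1 1 0 + X.c 2 2 0 : ℕ) : ℤ)
      = 1 + (X.c 1 1 0 : ℤ) + (X.c 2 2 0 : ℤ) by push_cast; ring] at this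
  exact this

lemma low_le_N1 {u : Fin 5} (hu : u = 0 ∨ u = 1 ∨ u = 2) {x y : V}
    (h : X.M u x y = 1) : X.N1 x y = 1 := by
  rw [N1_apply]
  rcases hu with rfl | rfl | rfl
  · rw [h, X.disj h (by decide : (1:Fin 5) ≠ 0), X.disj h (by decide : (2:Fin 5) ≠ 0)]; ring
  · rw [h, X.disj h (by decide : (0:Fin 5) ≠ 1), X.disj h (by decide : (2:Fin 5) ≠ 1)]; ring
  · rw [h, X.disj h (by decide : (0:Fin 5) ≠ 2), X.disj h (by decide : (1:Fin 5) ≠ 2)]; ring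

lemma M1_le_N0 {x y : V} (h : X.M 1 x y = 1) : X.N0 x y = 1 := by
  rw [N0_apply, h, X.disj h (by decide : (0:Fin 5) ≠ 1)]; ring

lemma N0_le_N1 {x y : V} (h : X.N0 x y = 1) : X.N1 x y = 1 := by
  rw [N1_apply]
  rw [N0_apply] at h
  rcases X.e01 0 x y with h0 | h0 <;> rcases X.e01 1 x y with h1 | h1
  · omega
  · rw [X.disj h1 (by decide : (2:Fin 5) ≠ 1)]; omega
  · rw [X.disj h0 (by decide : (2:Fin 5) ≠ 0)]; omega
  · rw [X.disj h0 (by decide : (2:Fin 5) ≠ 0)]; omega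

lemma hi_N1_zero {i : Fin 5} (hi : i = 3 ∨ i = 4) {x y : V}
    (h : X.M i x y = 1) : X.N1 x y = 0 := by
  rw [N1_apply]
  rcases hi with rfl | rfl
  · rw [X.disj h (by decide : (0:Fin 5) ≠ 3), X.disj h (by decide : (1:Fin 5) ≠ 3),
      X.disj h (by decide : (2:Fin 5) ≠ 3)]; ring
  · rw [X.disj h (by decide : (0:Fin 5) ≠ 4), X.disj h (by decide : (1:Fin 5) ≠ 4),
      X.disj h (by decide : (2:Fin 5) ≠ 4)]; ring

lemma offN1 {x y : V} (h : X.N1 x y = 0) : X.M 3 x y + X.M 4 x y = 1 := by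
  have hs := X.sum5 x y
  rw [N1_apply] at h
  omega

lemma M2_N0_zero {x y : V} (h : X.M 2 x y = 1) : X.N0 x y = 0 := by
  rw [N0_apply, X.disj h (by decide : (0:Fin 5) ≠ 2), X.disj h (by decide : (1:Fin 5) ≠ 2)]; ring

lemma rowsum_M0 (x : V) : ∑ y, X.M 0 x y = 1 := by
  rw [X.M_zero]
  simp [Matrix.one_apply]

lemma rowsum_N0 (x : V) : ∑ y, X.N0 x y = 1 + (X.c 1 1 0 : ℤ) := by
  have : ∑ y, X.N0 x y = (∑ y, X.M 0 x y) + ∑ y, X.M 1 x y := by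
    rw [← Finset.sum_add_distrib]
    rfl
  rw [this, X.rowsum_M0, X.rowsum 1]

lemma rowsum_N1 (x : V) : ∑ y, X.N1 x y = 1 + (X.c 1 1 0 : ℤ) + (X.c 2 2 0 : ℤ) := by
  have : ∑ y, X.N1 x y = (∑ y, X.N0 x y) + ∑ y, X.M 2 x y := by
    rw [← Finset.sum_add_distrib]
    rfl
  rw [this, X.rowsum_N0, X.rowsum 2]

lemma exists_outside (x : V) : ∃ z, X.N1 x z = 0 := by
  by_contra h
  push_neg at h
  have hall : ∀ z, X.N1 x z = 1 := by
    intro z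
    rcases X.N1_01 x z with h' | h'
    · exact absurd h' (h z)
    · exact h'
  have h1 : ∑ z, X.N1 x z = (Fintype.card V : ℤ) := by
    rw [Finset.sum_congr rfl (fun z _ => hall z)]
    simp
  have hJ : ∃ u w, X.N1 u w ≠ 1 := by
    by_contra hJ
    push_neg at hJ
    apply X.N1_ne_J
    ext u w
    simpa [N1_apply] using hJ u w
  obtain ⟨u, w, huw⟩ := hJ
  have huw0 : X.N1 u w = 0 := by rcases X.N1_01 u w with h' | h' <;> simp_all
  have h2 : ∑ z, X.N1 u z < (Fintype.card V : ℤ) := by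
    have : ∑ z, X.N1 u z < ∑ z : V, (1 : ℤ) := by
      apply Finset.sum_lt_sum (fun z _ => ?_) ⟨w, Finset.mem_univ w, by omega⟩
      rcases X.N1_01 u z with h' | h' <;> omega
    simpa using this
  rw [X.rowsum_N1] at h1 h2
  omega

lemma rowsum_mul (A B : Matrix V V ℤ) (b : ℤ) (hB : ∀ z, ∑ y, B z y = b) (x : V) :
    ∑ y, (A * B) x y = (∑ z, A x z) * b := by
  calc ∑ y, (A * B) x y = ∑ y, ∑ z, A x z * B z y := by
        refine Finset.sum_congr rfl (fun y _ => ?_); exact Matrix.mul_apply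
  _ = ∑ z, ∑ y, A x z * B z y := Finset.sum_comm
  _ = ∑ z, A x z * b := by
        refine Finset.sum_congr rfl (fun z _ => ?_)
        rw [← Finset.mul_sum, hB z]
  _ = (∑ z, A x z) * b := by rw [Finset.sum_mul]

end Parabolic

section Products

lemma c_low_zero (t i u : Fin 5) (ht : t = 1 ∨ t = 2) (hi : i = 3 ∨ i = 4)
    (hu : u = 0 ∨ u = 1 ∨ u = 2) : (X.c t i u : ℤ) = 0 := by
  obtain ⟨x, y, hxy⟩ := X.exists_pair u
  have hN1xy : X.N1 x y = 1 := X.low_le_N1 hu hxy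
  rw [← X.mul_apply_rel t i hxy]
  rw [Matrix.mul_apply]
  apply Finset.sum_eq_zero
  intro z _
  rcases X.e01 t x z with h1 | h1
  · rw [h1]; ring
  rcases X.e01 i z y with h2 | h2
  · rw [h2]; ring
  exfalso
  have hN1xz : X.N1 x z = 1 := X.low_le_N1 (by rcases ht with rfl | rfl <;> simp) h1
  have hN1zy : X.N1 z y = 0 := X.hi_N1_zero hi h2
  have hN1zx : X.N1 z x = 1 := by
    rw [equiv_symm_apply X.N1_symm]; exact hN1xz
  have := equiv_trans X.N1_01 X.N1_sq' hN1zx hN1xy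
  omega

lemma mul_low_high (t i : Fin 5) (ht : t = 1 ∨ t = 2) (hi : i = 3 ∨ i = 4) :
    X.M t * X.M i = (X.c t i 3 : ℤ) • X.M 3 + (X.c t i 4 : ℤ) • X.M 4 := by
  rw [X.mul_M t i, Fin.sum_univ_five]
  rw [X.c_low_zero t i 0 ht hi (by simp), X.c_low_zero t i 1 ht hi (by simp),
    X.c_low_zero t i 2 ht hi (by simp)]
  simp

lemma dichotomy (i j : Fin 5) (hij : (i = 3 ∧ j = 4) ∨ (i = 4 ∧ j = 3))
    (E : Matrix V V ℤ) (k p q : ℤ)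
    (h01 : ∀ x y, E x y = 0 ∨ E x y = 1) (hsymm : Eᵀ = E) (hdiag : ∀ x, E x x = 1)
    (hsq : E * E = k • E)
    (hsub : ∀ x y, E x y = 1 → X.N1 x y = 1)
    (hexp : E * X.M i = p • X.M i + q • X.M j)
    (hne : p ≠ q) : E * X.M i = k • X.M i ∧ p = k ∧ q = 0 := by
  have hi : i = 3 ∨ i = 4 := by rcases hij with ⟨h, _⟩ | ⟨h, _⟩ <;> [left; right] <;> exact h
  have hji : j ≠ i := by rcases hij with ⟨h1, h2⟩ | ⟨h1, h2⟩ <;> rw [h1, h2] <;> decide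
  obtain ⟨x, y, hxy⟩ := X.exists_pair i
  have hMjxy : X.M j x y = 0 := X.disj hxy hji
  have h1 : (E * X.M i) x y = p := by
    rw [hexp, Matrix.add_apply, Matrix.smul_apply, Matrix.smul_apply, hxy, hMjxy]
    simp
  have hN1xy : X.N1 x y = 0 := X.hi_N1_zero hi hxy
  have key : ∀ z, E x z = 1 → X.M i z y = 1 := by
    intro z hz
    have h3 : (E * X.M i) z y = (E * X.M i) x y := by
      rw [Matrix.mul_apply, Matrix.mul_apply]
      refine Finset.sum_congr rfl (fun w _ => ?_)
      rw [equiv_rows_eq h01 hsymm hsq hz w]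
    have hN1xz : X.N1 x z = 1 := hsub x z hz
    have hN1zy : X.N1 z y = 0 := by
      rcases X.N1_01 z y with h' | h'
      · exact h'
      · exfalso
        have := equiv_trans X.N1_01 X.N1_sq' hN1xz h'
        omega
    have hsum : X.M i z y + X.M j z y = 1 := by
      have := X.offN1 hN1zy
      rcases hij with ⟨h1', h2'⟩ | ⟨h1', h2'⟩ <;> rw [h1', h2'] <;> omega
    rcases X.e01 i z y with h' | h'
    · exfalso
      have hMj : X.M j z y = 1 := by omega
      have h2 : (E * X.M i) z y = q := by
        rw [hexp, Matrix.add_apply, Matrix.smul_apply, Matrix.smul_apply, h', hMj]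
        simp
      rw [h3, h1] at h2
      exact hne h2
    · exact h'
  have hk : ∑ w, E x w = k := equiv_rowsum h01 hsymm hdiag hsq x
  have hp : p = k := by
    have h2 : (E * X.M i) x y = ∑ w, E x w := by
      rw [Matrix.mul_apply]
      refine Finset.sum_congr rfl (fun w _ => ?_)
      rcases h01 x w with h' | h'
      · rw [h']; ring
      · rw [h', key w h']; ring
    rw [h2, hk] at h1
    omega
  have hq : q = 0 := by
    have hr1 : ∑ w, (E * X.M i) x w = k * (X.c i i 0 : ℤ) := by
      rw [rowsum_mul E (X.M i) (X.c i i 0 : ℤ) (X.rowsum i) x, hk]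
    have hr2 : ∑ w, (E * X.M i) x w
        = p * (X.c i i 0 : ℤ) + q * (X.c j j 0 : ℤ) := by
      rw [hexp]
      have : ∀ w, (p • X.M i + q • X.M j) x w = p * X.M i x w + q * X.M j x w := by
        intro w; rw [Matrix.add_apply, Matrix.smul_apply, Matrix.smul_apply]; rfl
      rw [Finset.sum_congr rfl (fun w _ => this w), Finset.sum_add_distrib,
        ← Finset.mul_sum, ← Finset.mul_sum, X.rowsum i, X.rowsum j]
    have hnj := X.npos j
    rw [hr1, hp] at hr2
    have : q * (X.c j j 0 : ℤ) = 0 := by omega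
    exact (mul_eq_zero.mp this).resolve_right (by omega)
  refine ⟨?_, hp, hq⟩
  rw [hexp, hp, hq]
  simp

end Products

section Instantiate

lemma ij34 {i j : Fin 5} (hij : (i = 3 ∧ j = 4) ∨ (i = 4 ∧ j = 3)) :
    (i = 3 ∨ i = 4) ∧ (j = 3 ∨ j = 4) ∧ j ≠ i ∧ i ≠ 0 ∧ i ≠ 1 ∧ i ≠ 2 := by
  rcases hij with ⟨h1, h2⟩ | ⟨h1, h2⟩ <;> rw [h1, h2] <;>
    exact ⟨by simp, by simp, by decide, by decide, by decide, by decide⟩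

lemma N0_mul_exp (i j : Fin 5) (hij : (i = 3 ∧ j = 4) ∨ (i = 4 ∧ j = 3)) :
    X.N0 * X.M i = (1 + (X.c 1 i i : ℤ)) • X.M i + (X.c 1 i j : ℤ) • X.M j := by
  have h1 : X.N0 * X.M i = X.M i + X.M 1 * X.M i := by
    rw [N0, add_mul, X.M_zero, one_mul]
  rw [h1, X.mul_low_high 1 i (by simp) (ij34 hij).1]
  rcases hij with ⟨h1', h2'⟩ | ⟨h1', h2'⟩ <;> rw [h1', h2'] <;>
    rw [add_smul, one_smul] <;> abel

lemma N0_coeff (i j : Fin 5) (hij : (i = 3 ∧ j = 4) ∨ (i = 4 ∧ j = 3)) :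
    1 + (X.c 1 i i : ℤ) = (X.c 1 i j : ℤ) := by
  by_contra hne
  have hd := X.dichotomy i j hij X.N0 (1 + (X.c 1 1 0 : ℤ)) _ _ X.N0_01 X.N0_symm
    X.N0_diag X.N0_sq' (fun x y h => X.N0_le_N1 h) (X.N0_mul_exp i j hij) hne
  have hmem : i ∈ ({3, 4} : Finset (Fin 5)) := by
    rcases hij with ⟨h1, _⟩ | ⟨h1, _⟩ <;> rw [h1] <;> decide
  refine X.radical i hmem {1} ⟨1, by decide⟩ (by decide) ⟨?_, ?_⟩
  · rw [Finset.sum_singleton, Finset.sum_singleton]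
    have hN0 : (1 : Matrix V V ℤ) + X.M 1 = X.N0 := by rw [N0, X.M_zero]
    rw [hN0]
    exact X.N0_sq'
  · rw [Finset.sum_singleton, Finset.sum_singleton]
    have hN0 : (1 : Matrix V V ℤ) + X.M 1 = X.N0 := by rw [N0, X.M_zero]
    rw [hN0]
    exact hd.1

lemma N0_mul (i j : Fin 5) (hij : (i = 3 ∧ j = 4) ∨ (i = 4 ∧ j = 3)) :
    X.N0 * X.M i = (X.c 1 i j : ℤ) • (X.M i + X.M j) := by
  rw [X.N0_mul_exp i j hij, ← X.N0_coeff i j hij, smul_add]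

lemma g_row (i j : Fin 5) (hij : (i = 3 ∧ j = 4) ∨ (i = 4 ∧ j = 3)) :
    (X.c 1 i j : ℤ) * ((X.c 3 3 0 : ℤ) + (X.c 4 4 0 : ℤ))
      = (1 + (X.c 1 1 0 : ℤ)) * (X.c i i 0 : ℤ) := by
  obtain ⟨x⟩ := X.nonempty
  have h1 : ∑ y, (X.N0 * X.M i) x y = (1 + (X.c 1 1 0 : ℤ)) * (X.c i i 0 : ℤ) := by
    rw [rowsum_mul X.N0 (X.M i) _ (X.rowsum i) x, X.rowsum_N0]
  have h2 : ∑ y, ((X.c 1 i j : ℤ) • (X.M i + X.M j)) x y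
      = (X.c 1 i j : ℤ) * ((X.c i i 0 : ℤ) + (X.c j j 0 : ℤ)) := by
    have : ∀ y, ((X.c 1 i j : ℤ) • (X.M i + X.M j)) x y
        = (X.c 1 i j : ℤ) * (X.M i x y + X.M j x y) := by
      intro y; rw [Matrix.smul_apply, Matrix.add_apply, smul_eq_mul]
    rw [Finset.sum_congr rfl (fun y _ => this y), ← Finset.mul_sum,
      Finset.sum_add_distrib, X.rowsum i, X.rowsum j]
  rw [X.N0_mul i j hij, h2] at h1
  rcases hij with ⟨h1', h2'⟩ | ⟨h1', h2'⟩ <;> rw [h1', h2'] at h1 ⊢ <;> linarith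

lemma N1_mul_exp (i j : Fin 5) (hij : (i = 3 ∧ j = 4) ∨ (i = 4 ∧ j = 3)) :
    X.N1 * X.M i = (1 + (X.c 1 i i : ℤ) + (X.c 2 i i : ℤ)) • X.M i
      + ((X.c 1 i j : ℤ) + (X.c 2 i j : ℤ)) • X.M j := by
  have h1 : X.N1 * X.M i = X.N0 * X.M i + X.M 2 * X.M i := by
    rw [N1, N0, add_mul]
  rw [h1, X.N0_mul_exp i j hij, X.mul_low_high 2 i (by simp) (ij34 hij).1]
  rcases hij with ⟨h1', h2'⟩ | ⟨h1', h2'⟩ <;> rw [h1', h2'] <;>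
    simp only [add_smul, one_smul] <;> abel

lemma N1_coeff (i j : Fin 5) (hij : (i = 3 ∧ j = 4) ∨ (i = 4 ∧ j = 3)) :
    1 + (X.c 1 i i : ℤ) + (X.c 2 i i : ℤ) = (X.c 1 i j : ℤ) + (X.c 2 i j : ℤ) := by
  by_contra hne
  have hd := X.dichotomy i j hij X.N1 (1 + (X.c 1 1 0 : ℤ) + (X.c 2 2 0 : ℤ)) _ _
    X.N1_01 X.N1_symm X.N1_diag X.N1_sq' (fun x y h => h) (X.N1_mul_exp i j hij) hne
  have hmem : i ∈ ({3, 4} : Finset (Fin 5)) := by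
    rcases hij with ⟨h1, _⟩ | ⟨h1, _⟩ <;> rw [h1] <;> decide
  have hsum : ∑ t ∈ ({1, 2} : Finset (Fin 5)), X.M t = X.M 1 + X.M 2 :=
    Finset.sum_pair (by decide)
  have hN1 : (1 : Matrix V V ℤ) + (X.M 1 + X.M 2) = X.N1 := by
    rw [N1, X.M_zero, add_assoc]
  have hscal : (1 + ∑ t ∈ ({1, 2} : Finset (Fin 5)), (X.c t t 0 : ℤ))
      = 1 + (X.c 1 1 0 : ℤ) + (X.c 2 2 0 : ℤ) := by
    rw [Finset.sum_pair (by decide : (1 : Fin 5) ≠ 2)]; ring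
  refine X.radical i hmem {1, 2} ⟨1, by decide⟩ (by decide) ⟨?_, ?_⟩
  · rw [hsum, hscal, hN1]; exact X.N1_sq'
  · rw [hsum, hscal, hN1]; exact hd.1

lemma N1_mul (i j : Fin 5) (hij : (i = 3 ∧ j = 4) ∨ (i = 4 ∧ j = 3)) :
    X.N1 * X.M i = ((X.c 1 i j : ℤ) + (X.c 2 i j : ℤ)) • (X.M i + X.M j) := by
  rw [X.N1_mul_exp i j hij, ← X.N1_coeff i j hij, smul_add]

lemma e_row (i j : Fin 5) (hij : (i = 3 ∧ j = 4) ∨ (i = 4 ∧ j = 3)) :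
    ((X.c 1 i j : ℤ) + (X.c 2 i j : ℤ)) * ((X.c 3 3 0 : ℤ) + (X.c 4 4 0 : ℤ))
      = (1 + (X.c 1 1 0 : ℤ) + (X.c 2 2 0 : ℤ)) * (X.c i i 0 : ℤ) := by
  obtain ⟨x⟩ := X.nonempty
  have h1 : ∑ y, (X.N1 * X.M i) x y
      = (1 + (X.c 1 1 0 : ℤ) + (X.c 2 2 0 : ℤ)) * (X.c i i 0 : ℤ) := by
    rw [rowsum_mul X.N1 (X.M i) _ (X.rowsum i) x, X.rowsum_N1]
  have h2 : ∑ y, (((X.c 1 i j : ℤ) + (X.c 2 i j : ℤ)) • (X.M i + X.M j)) x y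
      = ((X.c 1 i j : ℤ) + (X.c 2 i j : ℤ)) * ((X.c i i 0 : ℤ) + (X.c j j 0 : ℤ)) := by
    have : ∀ y, (((X.c 1 i j : ℤ) + (X.c 2 i j : ℤ)) • (X.M i + X.M j)) x y
        = ((X.c 1 i j : ℤ) + (X.c 2 i j : ℤ)) * (X.M i x y + X.M j x y) := by
      intro y; rw [Matrix.smul_apply, Matrix.add_apply, smul_eq_mul]
    rw [Finset.sum_congr rfl (fun y _ => this y), ← Finset.mul_sum,
      Finset.sum_add_distrib, X.rowsum i, X.rowsum j]
  rw [X.N1_mul i j hij, h2] at h1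
  rcases hij with ⟨h1', h2'⟩ | ⟨h1', h2'⟩ <;> rw [h1', h2'] at h1 ⊢ <;> linarith

lemma M2_mul (i j : Fin 5) (hij : (i = 3 ∧ j = 4) ∨ (i = 4 ∧ j = 3)) :
    X.M 2 * X.M i = (X.c 2 i j : ℤ) • (X.M i + X.M j) := by
  have h1 : X.N1 * X.M i = X.N0 * X.M i + X.M 2 * X.M i := by
    rw [N1, N0, add_mul]
  have h2 := X.N1_mul i j hij
  rw [h1, X.N0_mul i j hij] at h2
  have h3 : X.M 2 * X.M i
      = ((X.c 1 i j : ℤ) + (X.c 2 i j : ℤ)) • (X.M i + X.M j)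
        - (X.c 1 i j : ℤ) • (X.M i + X.M j) := by
    rw [← h2]; abel
  rw [h3, add_smul]; abel

lemma eps_row (i j : Fin 5) (hij : (i = 3 ∧ j = 4) ∨ (i = 4 ∧ j = 3)) :
    (X.c 2 i j : ℤ) * ((X.c 3 3 0 : ℤ) + (X.c 4 4 0 : ℤ))
      = (X.c 2 2 0 : ℤ) * (X.c i i 0 : ℤ) := by
  have h1 := X.e_row i j hij
  have h2 := X.g_row i j hij
  linarith [h1, h2]

end Instantiate

section Traces

lemma trace_pair (k l : Fin 5) (h : l ≠ k) : Matrix.trace (X.M k * X.M l) = 0 := by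
  rw [Matrix.trace]
  apply Finset.sum_eq_zero
  intro x _
  rw [Matrix.diag_apply, Matrix.mul_apply]
  apply Finset.sum_eq_zero
  intro y _
  rcases X.e01 k x y with h' | h'
  · rw [h']; ring
  · rw [equiv_symm_apply (X.M_symm l) x y, X.disj h' h]; ring

lemma trace_self (k : Fin 5) :
    Matrix.trace (X.M k * X.M k) = (Fintype.card V : ℤ) * (X.c k k 0 : ℤ) := by
  rw [Matrix.trace]
  have : ∀ x : V, Matrix.diag (X.M k * X.M k) x = (X.c k k 0 : ℤ) := by
    intro x
    rw [Matrix.diag_apply]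
    exact X.mul_apply_rel k k (X.M0_diag x)
  rw [Finset.sum_congr rfl (fun x _ => this x)]
  simp [Finset.card_univ, mul_comm]

lemma card_pos : (0 : ℤ) < (Fintype.card V : ℤ) ∨ X.M 0 = X.M 0 := by
  left
  haveI := X.nonempty
  have : 0 < Fintype.card V := Fintype.card_pos
  exact_mod_cast this

lemma M1_mul (i j : Fin 5) (hij : (i = 3 ∧ j = 4) ∨ (i = 4 ∧ j = 3)) :
    X.M 1 * X.M i = (X.c 1 i j : ℤ) • (X.M i + X.M j) - X.M i := by
  have h1 : X.N0 * X.M i = X.M i + X.M 1 * X.M i := by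
    rw [N0, add_mul, X.M_zero, one_mul]
  have h2 := X.N0_mul i j hij
  rw [h1] at h2
  rw [← h2]; abel

lemma mul_comm_hi (t i : Fin 5) (ht : t = 1 ∨ t = 2)
    (hi : i = 3 ∨ i = 4) : X.M i * X.M t = X.M t * X.M i := by
  have h1 : (X.M t * X.M i)ᵀ = X.M i * X.M t := by
    rw [Matrix.transpose_mul, X.M_symm, X.M_symm]
  have h2 : (X.M t * X.M i)ᵀ = X.M t * X.M i := by
    rw [X.mul_low_high t i ht hi]
    rw [Matrix.transpose_add, Matrix.transpose_smul, Matrix.transpose_smul,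
      X.M_symm, X.M_symm]
  rw [← h1, h2]

lemma cD1 (i j : Fin 5) (hij : (i = 3 ∧ j = 4) ∨ (i = 4 ∧ j = 3)) :
    (X.c i i 1 : ℤ) * (X.c 1 1 0 : ℤ) = ((X.c 1 i j : ℤ) - 1) * (X.c i i 0 : ℤ) := by
  obtain ⟨hi, hj, hji, hi0, hi1, hi2⟩ := ij34 hij
  have hA : Matrix.trace ((X.M i * X.M i) * X.M 1)
      = (X.c i i 1 : ℤ) * ((Fintype.card V : ℤ) * (X.c 1 1 0 : ℤ)) := by
    rw [X.mul_M i i, Finset.sum_mul, Matrix.trace_sum, Fin.sum_univ_five]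
    rw [smul_mul_assoc, smul_mul_assoc, smul_mul_assoc, smul_mul_assoc, smul_mul_assoc]
    rw [Matrix.trace_smul, Matrix.trace_smul, Matrix.trace_smul, Matrix.trace_smul,
      Matrix.trace_smul]
    rw [X.trace_pair 0 1 (by decide), X.trace_pair 2 1 (by decide),
      X.trace_pair 3 1 (by decide), X.trace_pair 4 1 (by decide)]
    have h11 : Matrix.trace (X.M 1 * X.M 1)
        = (Fintype.card V : ℤ) * (X.c 1 1 0 : ℤ) := X.trace_self 1
    rw [h11]
    simp
  have hB : Matrix.trace (X.M i * (X.M i * X.M 1))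
      = ((X.c 1 i j : ℤ) - 1) * ((Fintype.card V : ℤ) * (X.c i i 0 : ℤ)) := by
    rw [mul_comm_hi X 1 i (by simp) hi, X.M1_mul i j hij]
    rw [mul_sub, mul_smul_comm, mul_add]
    rw [Matrix.trace_sub, Matrix.trace_smul, Matrix.trace_add]
    rw [X.trace_self i, X.trace_pair i j hji]
    simp [sub_mul]
  rw [← mul_assoc, hA] at hB
  have hcard : (Fintype.card V : ℤ) ≠ 0 := by
    rcases X.card_pos with h | _
    · omega
    · haveI := X.nonempty
      have : 0 < Fintype.card V := Fintype.card_pos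
      omega
  apply mul_left_cancel₀ hcard
  linear_combination hB

lemma cD2 (i j : Fin 5) (hij : (i = 3 ∧ j = 4) ∨ (i = 4 ∧ j = 3)) :
    (X.c i i 2 : ℤ) * (X.c 2 2 0 : ℤ) = (X.c 2 i j : ℤ) * (X.c i i 0 : ℤ) := by
  obtain ⟨hi, hj, hji, hi0, hi1, hi2⟩ := ij34 hij
  have hA : Matrix.trace ((X.M i * X.M i) * X.M 2)
      = (X.c i i 2 : ℤ) * ((Fintype.card V : ℤ) * (X.c 2 2 0 : ℤ)) := by
    rw [X.mul_M i i, Finset.sum_mul, Matrix.trace_sum, Fin.sum_univ_five]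
    rw [smul_mul_assoc, smul_mul_assoc, smul_mul_assoc, smul_mul_assoc, smul_mul_assoc]
    rw [Matrix.trace_smul, Matrix.trace_smul, Matrix.trace_smul, Matrix.trace_smul,
      Matrix.trace_smul]
    rw [X.trace_pair 0 2 (by decide), X.trace_pair 1 2 (by decide),
      X.trace_pair 3 2 (by decide), X.trace_pair 4 2 (by decide)]
    rw [X.trace_self 2]
    simp
  have hB : Matrix.trace (X.M i * (X.M i * X.M 2))
      = (X.c 2 i j : ℤ) * ((Fintype.card V : ℤ) * (X.c i i 0 : ℤ)) := by
    rw [mul_comm_hi X 2 i (by simp) hi, X.M2_mul i j hij]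
    rw [mul_smul_comm, mul_add]
    rw [Matrix.trace_smul, Matrix.trace_add]
    rw [X.trace_self i, X.trace_pair i j hji]
    simp
  rw [← mul_assoc, hA] at hB
  have hcard : (Fintype.card V : ℤ) ≠ 0 := by
    rcases X.card_pos with h | _
    · omega
    · haveI := X.nonempty
      have : 0 < Fintype.card V := Fintype.card_pos
      omega
  apply mul_left_cancel₀ hcard
  linear_combination hB

lemma Mi_sq_row (i : Fin 5) :
    (X.c i i 0 : ℤ) * (X.c i i 0 : ℤ)
      = (X.c i i 0 : ℤ) + (X.c i i 1 : ℤ) * (X.c 1 1 0 : ℤ)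
        + (X.c i i 2 : ℤ) * (X.c 2 2 0 : ℤ) + (X.c i i 3 : ℤ) * (X.c 3 3 0 : ℤ)
        + (X.c i i 4 : ℤ) * (X.c 4 4 0 : ℤ) := by
  obtain ⟨x⟩ := X.nonempty
  have h1 : ∑ y, (X.M i * X.M i) x y = (X.c i i 0 : ℤ) * (X.c i i 0 : ℤ) := by
    rw [rowsum_mul (X.M i) (X.M i) _ (X.rowsum i) x, X.rowsum i]
  rw [X.mul_M i i] at h1
  have h2 : ∀ y, (∑ k : Fin 5, (X.c i i k : ℤ) • X.M k) x y
      = ∑ k : Fin 5, (X.c i i k : ℤ) * X.M k x y := by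
    intro y
    rw [Matrix.sum_apply]
    refine Finset.sum_congr rfl (fun k _ => ?_)
    rw [Matrix.smul_apply, smul_eq_mul]
  rw [Finset.sum_congr rfl (fun y _ => h2 y), Finset.sum_comm] at h1
  have h3 : ∀ k : Fin 5, ∑ y, (X.c i i k : ℤ) * X.M k x y
      = (X.c i i k : ℤ) * ∑ y, X.M k x y := fun k => (Finset.mul_sum _ _ _).symm
  rw [Finset.sum_congr rfl (fun k _ => h3 k), Fin.sum_univ_five] at h1
  rw [X.rowsum_M0, X.rowsum 1, X.rowsum 2, X.rowsum 3, X.rowsum 4] at h1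
  rw [← h1]
  ring


end Traces

section MoreProducts

lemma equiv_mul_le (E F : Matrix V V ℤ) (k l : ℤ)
    (hE01 : ∀ x y, E x y = 0 ∨ E x y = 1) (hEsymm : Eᵀ = E)
    (hEdiag : ∀ x, E x x = 1) (hEsq : E * E = k • E)
    (hF01 : ∀ x y, F x y = 0 ∨ F x y = 1) (hFsymm : Fᵀ = F)
    (hFsq : F * F = l • F)
    (hle : ∀ x y, E x y = 1 → F x y = 1) :
    E * F = k • F := by
  ext x y
  rw [Matrix.mul_apply, Matrix.smul_apply, smul_eq_mul]
  rcases hF01 x y with hF | hF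
  · rw [hF, mul_zero]
    apply Finset.sum_eq_zero
    intro z _
    rcases hE01 x z with hE | hE
    · rw [hE]; ring
    rcases hF01 z y with hFz | hFz
    · rw [hFz]; ring
    exfalso
    have hFxz : F x z = 1 := hle x z hE
    have := equiv_trans hF01 hFsq hFxz hFz
    omega
  · rw [hF, mul_one]
    have : ∀ z, E x z * F z y = E x z := by
      intro z
      rcases hE01 x z with hE | hE
      · rw [hE]; ring
      · have hFxz : F x z = 1 := hle x z hE
        have hFzx : F z x = 1 := by rw [equiv_symm_apply hFsymm]; exact hFxz
        have hFzy : F z y = 1 := equiv_trans hF01 hFsq hFzx hF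
        rw [hE, hFzy]; norm_num
    rw [Finset.sum_congr rfl (fun z _ => this z)]
    exact equiv_rowsum hE01 hEsymm hEdiag hEsq x

lemma N0_mul_N1 : X.N0 * X.N1 = (1 + (X.c 1 1 0 : ℤ)) • X.N1 :=
  equiv_mul_le X.N0 X.N1 _ _ X.N0_01 X.N0_symm X.N0_diag X.N0_sq'
    X.N1_01 X.N1_symm X.N1_sq' (fun x y h => X.N0_le_N1 h)

lemma N1_mul_N0 : X.N1 * X.N0 = (1 + (X.c 1 1 0 : ℤ)) • X.N1 := by
  have h1 : (X.N0 * X.N1)ᵀ = X.N1 * X.N0 := by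
    rw [Matrix.transpose_mul, X.N0_symm, X.N1_symm]
  rw [← h1, X.N0_mul_N1, Matrix.transpose_smul, X.N1_symm]

lemma M2_sq : X.M 2 * X.M 2
    = (X.c 2 2 0 : ℤ) • (1 : Matrix V V ℤ) + (X.c 2 2 0 : ℤ) • X.M 1
      + ((X.c 2 2 0 : ℤ) - 1 - (X.c 1 1 0 : ℤ)) • X.M 2 := by
  have hM2 : X.M 2 = X.N1 - X.N0 := by rw [N1, N0]; abel
  have h1 : X.M 2 * X.M 2
      = X.N1 * X.N1 - X.N1 * X.N0 - X.N0 * X.N1 + X.N0 * X.N0 := by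
    rw [hM2, sub_mul, mul_sub, mul_sub]; abel
  rw [h1, X.N1_sq', X.N1_mul_N0, X.N0_mul_N1, X.N0_sq']
  have hN0 : X.N0 = 1 + X.M 1 := by rw [N0, X.M_zero]
  have hN1 : X.N1 = 1 + X.M 1 + X.M 2 := by rw [N1, X.M_zero]
  rw [hN0, hN1]
  simp only [smul_add, add_smul, sub_smul, one_smul]
  abel

/-- the all-ones matrix -/
lemma M34_eq : X.M 3 + X.M 4 = (Matrix.of fun _ _ => (1 : ℤ)) - X.N1 := by
  rw [← X.sum_M, N1]
  abel

lemma mul_J (t : Fin 5) : X.M t * (Matrix.of fun _ _ => (1 : ℤ))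
    = (X.c t t 0 : ℤ) • (Matrix.of fun _ _ => (1 : ℤ)) := by
  ext x y
  rw [Matrix.mul_apply, Matrix.smul_apply]
  have : ∀ z, X.M t x z * (Matrix.of fun _ _ => (1 : ℤ)) z y = X.M t x z := by
    intro z; simp
  rw [Finset.sum_congr rfl (fun z _ => this z), X.rowsum t]
  simp

lemma hi_mul_N1 (i j : Fin 5) (hij : (i = 3 ∧ j = 4) ∨ (i = 4 ∧ j = 3)) :
    X.M i * X.N1 = ((X.c 1 i j : ℤ) + (X.c 2 i j : ℤ)) • (X.M i + X.M j) := by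
  have h1 : (X.N1 * X.M i)ᵀ = X.M i * X.N1 := by
    rw [Matrix.transpose_mul, X.N1_symm, X.M_symm]
  rw [← h1, X.N1_mul i j hij, Matrix.transpose_smul, Matrix.transpose_add,
    X.M_symm, X.M_symm]

lemma hi_mul_M34 (i j : Fin 5) (hij : (i = 3 ∧ j = 4) ∨ (i = 4 ∧ j = 3)) :
    X.M i * X.M 3 + X.M i * X.M 4
      = (X.c i i 0 : ℤ) • (Matrix.of fun _ _ => (1 : ℤ))
        - ((X.c 1 i j : ℤ) + (X.c 2 i j : ℤ)) • (X.M i + X.M j) := by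
  have h1 : X.M i * (X.M 3 + X.M 4)
      = X.M i * (Matrix.of fun _ _ => (1 : ℤ)) - X.M i * X.N1 := by
    rw [X.M34_eq, mul_sub]
  rw [mul_add] at h1
  rw [h1, X.mul_J i, X.hi_mul_N1 i j hij]

lemma mul34_comm : X.M 3 * X.M 4 = X.M 4 * X.M 3 := by
  have h1 : (X.M 3 * X.M 4)ᵀ = X.M 4 * X.M 3 := by
    rw [Matrix.transpose_mul, X.M_symm, X.M_symm]
  have h2 : (X.M 3 * X.M 4)ᵀ = X.M 3 * X.M 4 := by
    rw [X.mul_M 3 4, Matrix.transpose_sum]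
    refine Finset.sum_congr rfl (fun k _ => ?_)
    rw [Matrix.transpose_smul, X.M_symm]
  rw [← h1, h2]

/-- key transfer: `c443 = c444` implies `c333 = c334` -/
lemma transfer (h : (X.c 4 4 3 : ℤ) = (X.c 4 4 4 : ℤ)) :
    (X.c 3 3 3 : ℤ) = (X.c 3 3 4 : ℤ) := by
  obtain ⟨x3, y3, h3⟩ := X.exists_pair 3
  obtain ⟨x4, y4, h4⟩ := X.exists_pair 4
  have hij3 : ((3:Fin 5) = 3 ∧ (4:Fin 5) = 4) ∨ ((3:Fin 5) = 4 ∧ (4:Fin 5) = 3) :=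
    Or.inl ⟨rfl, rfl⟩
  have hij4 : ((4:Fin 5) = 3 ∧ (3:Fin 5) = 4) ∨ ((4:Fin 5) = 4 ∧ (3:Fin 5) = 3) :=
    Or.inr ⟨rfl, rfl⟩
  have hA := X.hi_mul_M34 3 4 hij3
  have hB := X.hi_mul_M34 4 3 hij4
  -- evaluate expressions
  have ev : ∀ (A B : Matrix V V ℤ), A = B → ∀ x y, A x y = B x y := by
    intro A B hAB x y; rw [hAB]
  have m30 : X.M 3 x3 y3 = 1 := h3
  have m43 : X.M 4 x3 y3 = 0 := X.disj h3 (by decide)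
  have m44 : X.M 4 x4 y4 = 1 := h4
  have m34 : X.M 3 x4 y4 = 0 := X.disj h4 (by decide)
  have eA3 := ev _ _ hA x3 y3
  have eA4 := ev _ _ hA x4 y4
  have eB3 := ev _ _ hB x3 y3
  have eB4 := ev _ _ hB x4 y4
  rw [Matrix.add_apply, X.mul_apply_rel 3 3 m30, X.mul_apply_rel 3 4 m30,
    Matrix.sub_apply, Matrix.smul_apply, Matrix.smul_apply,
    Matrix.add_apply, m30, m43] at eA3
  rw [Matrix.add_apply, X.mul_apply_rel 3 3 m44, X.mul_apply_rel 3 4 m44,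
    Matrix.sub_apply, Matrix.smul_apply, Matrix.smul_apply,
    Matrix.add_apply, m44, m34] at eA4
  rw [Matrix.add_apply, X.mul_apply_rel 4 3 m30, X.mul_apply_rel 4 4 m30,
    Matrix.sub_apply, Matrix.smul_apply, Matrix.smul_apply,
    Matrix.add_apply, m30, m43] at eB3
  rw [Matrix.add_apply, X.mul_apply_rel 4 3 m44, X.mul_apply_rel 4 4 m44,
    Matrix.sub_apply, Matrix.smul_apply, Matrix.smul_apply,
    Matrix.add_apply, m44, m34] at eB4
  simp only [Matrix.of_apply, smul_eq_mul, mul_one] at eA3 eA4 eB3 eB4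
  -- commutation: c 4 3 k = c 3 4 k at the two witness pairs
  have hc := X.mul34_comm
  have hc3 : (X.c 3 4 3 : ℤ) = (X.c 4 3 3 : ℤ) := by
    have := ev _ _ hc x3 y3
    rw [X.mul_apply_rel 3 4 m30, X.mul_apply_rel 4 3 m30] at this
    exact this
  have hc4 : (X.c 3 4 4 : ℤ) = (X.c 4 3 4 : ℤ) := by
    have := ev _ _ hc x4 y4
    rw [X.mul_apply_rel 3 4 m44, X.mul_apply_rel 4 3 m44] at this
    exact this
  omega

end MoreProducts

section Contradictions

variable {P : Matrix V V ℤ} {n' : ℤ} {b : Fin 5 → ℤ}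

lemma alpha_con (hP01 : ∀ x y, P x y = 0 ∨ P x y = 1) (hPsymm : Pᵀ = P)
    (hPsq : P * P = n' • P)
    (hbP : ∀ t x y, t ≠ 0 → X.M t x y = 1 → P x y = b t)
    (hb2 : b 2 = 1) : b 1 = 1 := by
  obtain ⟨x2, y2, h2⟩ := X.exists_pair 2
  obtain ⟨x', hx'⟩ := X.exists_nbr 1 x2
  have hN1xx' : X.N1 x2 x' = 1 := X.low_le_N1 (by simp) hx'
  have hN1xy : X.N1 x2 y2 = 1 := X.low_le_N1 (by simp) h2
  have hN0xy : X.N0 x2 y2 = 0 := X.M2_N0_zero h2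
  have hN0xx' : X.N0 x2 x' = 1 := X.M1_le_N0 hx'
  have hN1x'y : X.N1 x' y2 = 1 := by
    have h1 : X.N1 x' x2 = 1 := by rw [equiv_symm_apply X.N1_symm]; exact hN1xx'
    exact equiv_trans X.N1_01 X.N1_sq' h1 hN1xy
  have hN0x'y : X.N0 x' y2 = 0 := by
    rcases X.N0_01 x' y2 with h | h
    · exact h
    · exfalso
      have := equiv_trans X.N0_01 X.N0_sq' hN0xx' h
      omega
  have hx'y : x' ≠ y2 := by
    rintro rfl
    rw [X.N0_diag] at hN0x'y
    omega
  have hM2x'y : X.M 2 x' y2 = 1 := by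
    have e1 := X.N1_apply x' y2
    have e0 := X.N0_apply x' y2
    omega
  have hP2 : P x2 y2 = 1 := by rw [hbP 2 x2 y2 (by decide) h2, hb2]
  have hP2' : P x' y2 = 1 := by rw [hbP 2 x' y2 (by decide) hM2x'y, hb2]
  have hPy2x' : P y2 x' = 1 := by rw [equiv_symm_apply hPsymm]; exact hP2'
  have hPxx' : P x2 x' = 1 := equiv_trans hP01 hPsq hP2 hPy2x'
  rw [← hbP 1 x2 x' (by decide) hx']
  exact hPxx'

lemma gamma_con (hP01 : ∀ x y, P x y = 0 ∨ P x y = 1) (hPsymm : Pᵀ = P)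
    (hPsq : P * P = n' • P)
    (hbP : ∀ t x y, t ≠ 0 → X.M t x y = 1 → P x y = b t)
    (hb2 : b 2 = 0) (hb3 : b 3 = 1) (hb4 : b 4 = 1) : False := by
  obtain ⟨x2, y2, h2⟩ := X.exists_pair 2
  obtain ⟨z, hz⟩ := X.exists_outside x2
  have hP34 : ∀ w w' : V, X.N1 w w' = 0 → P w w' = 1 := by
    intro w w' h
    have hsum := X.offN1 h
    rcases X.e01 3 w w' with h3 | h3
    · have h4 : X.M 4 w w' = 1 := by omega
      rw [hbP 4 w w' (by decide) h4, hb4]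
    · rw [hbP 3 w w' (by decide) h3, hb3]
  have hPxz : P x2 z = 1 := hP34 x2 z hz
  have hN1xy : X.N1 x2 y2 = 1 := X.low_le_N1 (by simp) h2
  have hN1zy : X.N1 z y2 = 0 := by
    rcases X.N1_01 z y2 with h | h
    · exact h
    · exfalso
      have h1 : X.N1 y2 z = 1 := by rw [equiv_symm_apply X.N1_symm]; exact h
      have := equiv_trans X.N1_01 X.N1_sq' hN1xy h1
      omega
  have hPzy : P z y2 = 1 := hP34 z y2 hN1zy
  have hPxy : P x2 y2 = 1 := equiv_trans hP01 hPsq hPxz hPzy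
  rw [hbP 2 x2 y2 (by decide) h2, hb2] at hPxy
  omega

end Contradictions

section Split

variable {P : Matrix V V ℤ} {n' : ℤ} {b : Fin 5 → ℤ}

lemma split_con (u w : Fin 5) (huw : (u = 3 ∧ w = 4) ∨ (u = 4 ∧ w = 3))
    (hP01 : ∀ x y, P x y = 0 ∨ P x y = 1) (hPsymm : Pᵀ = P)
    (hPdiag : ∀ x, P x x = 1) (hPsq : P * P = n' • P)
    (hbP : ∀ t x y, t ≠ 0 → X.M t x y = 1 → P x y = b t)
    (hbu : b u = 1) (hbw : b w = 0) : False := by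
  obtain ⟨hu, hw, hwu, hu0, hu1, hu2⟩ := ij34 huw
  have hw0 : w ≠ 0 := by rcases hw with rfl | rfl <;> decide
  -- Step 1 : c u u 2 > 0
  have he := X.eps_row u w huw
  have hd := X.cD2 u w huw
  have hn2 := X.npos 2
  have hnu := X.npos u
  have hn3 := X.npos 3
  have hn4 := X.npos 4
  have hcuw_nonneg : (0 : ℤ) ≤ (X.c 2 u w : ℤ) := Int.natCast_nonneg _
  have hcuw_pos : (0 : ℤ) < (X.c 2 u w : ℤ) := by
    rcases lt_or_eq_of_le hcuw_nonneg with h | h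
    · exact h
    · exfalso; rw [← h] at he; nlinarith
  have hcu2_pos : (0 : ℤ) < (X.c u u 2 : ℤ) := by nlinarith
  -- Step 2 : a common u-neighbour of an M2-pair
  obtain ⟨x2, y2, h2⟩ := X.exists_pair 2
  have hval : (X.M u * X.M u) x2 y2 = (X.c u u 2 : ℤ) := X.mul_apply_rel u u h2
  have hex : ∃ z, X.M u x2 z = 1 ∧ X.M u z y2 = 1 := by
    by_contra hno
    push_neg at hno
    have : ∀ z, X.M u x2 z * X.M u z y2 = 0 := by
      intro z
      rcases X.e01 u x2 z with hz | hz
      · rw [hz]; ring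
      · rcases X.e01 u z y2 with hz' | hz'
        · rw [hz']; ring
        · exact absurd hz' (hno z hz)
    rw [Matrix.mul_apply, Finset.sum_congr rfl (fun z _ => this z)] at hval
    simp at hval
    omega
  obtain ⟨z, hz1, hz2⟩ := hex
  -- Step 3 : b 2 = 1
  have hPx2z : P x2 z = 1 := by rw [hbP u x2 z hu0 hz1, hbu]
  have hPzy2 : P z y2 = 1 := by rw [hbP u z y2 hu0 hz2, hbu]
  have hPx2y2 : P x2 y2 = 1 := equiv_trans hP01 hPsq hPx2z hPzy2
  have hb2 : b 2 = 1 := by rw [← hbP 2 x2 y2 (by decide) h2]; exact hPx2y2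
  -- Step 4 : b 1 = 1
  have hb1 : b 1 = 1 := X.alpha_con hP01 hPsymm hPsq hbP hb2
  -- sum over {0,1,2,u,w}
  have hs5 : ∀ x y : V, X.M 0 x y + X.M 1 x y + X.M 2 x y
      + X.M u x y + X.M w x y = 1 := by
    intro x y
    have := X.sum5 x y
    rcases huw with ⟨rfl, rfl⟩ | ⟨rfl, rfl⟩ <;> omega
  -- P equals 1 + M1 + M2 + Mu
  have hPE : P = 1 + (X.M 1 + (X.M 2 + X.M u)) := by
    ext x y
    by_cases hxy : x = y
    · subst hxy
      rw [hPdiag x, Matrix.add_apply, Matrix.add_apply, Matrix.add_apply,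
        Matrix.one_apply_eq, X.diag0 (by decide : (1:Fin 5) ≠ 0),
        X.diag0 (by decide : (2:Fin 5) ≠ 0), X.diag0 hu0]
      ring
    · have hss := hs5 x y
      have hM0 : X.M 0 x y = 0 := X.M0_offdiag hxy
      rw [Matrix.add_apply, Matrix.add_apply, Matrix.add_apply,
        Matrix.one_apply_ne hxy]
      rcases X.e01 1 x y with k1 | k1 <;> rcases X.e01 2 x y with k2 | k2 <;>
        rcases X.e01 u x y with ku | ku <;> rcases X.e01 w x y with kw | kw <;>
        rw [k1, k2, ku] <;>
        first
          | omega
          | (rw [hbP 1 x y (by decide) k1, hb1]; ring)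
          | (rw [hbP 2 x y (by decide) k2, hb2]; ring)
          | (rw [hbP u x y hu0 ku, hbu]; ring)
          | (rw [hbP w x y hw0 kw, hbw]; ring)
  -- row sums identify n'
  have hrowP : ∀ x, ∑ y, P x y = n' := fun x =>
    equiv_rowsum hP01 hPsymm hPdiag hPsq x
  have hn'val : n' = 1 + ((X.c 1 1 0 : ℤ) + ((X.c 2 2 0 : ℤ) + (X.c u u 0 : ℤ))) := by
    obtain ⟨x0⟩ := X.nonempty
    have h1 := hrowP x0
    rw [hPE] at h1
    have h2 : ∑ y, (1 + (X.M 1 + (X.M 2 + X.M u)) : Matrix V V ℤ) x0 y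
        = (∑ y, (1 : Matrix V V ℤ) x0 y) + ((∑ y, X.M 1 x0 y)
          + ((∑ y, X.M 2 x0 y) + (∑ y, X.M u x0 y))) := by
      rw [← Finset.sum_add_distrib, ← Finset.sum_add_distrib, ← Finset.sum_add_distrib]
      rfl
    have h3 : ∑ y, (1 : Matrix V V ℤ) x0 y = 1 := by simp [Matrix.one_apply]
    rw [h2, h3, X.rowsum 1, X.rowsum 2, X.rowsum u] at h1
    omega
  -- off-P implication
  have hPoff1 : ∀ z' y', X.M w z' y' = 0 → P z' y' = 1 := by
    intro z' y' h0
    by_cases hzy : z' = y'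
    · subst hzy; exact hPdiag z'
    · have hss := hs5 z' y'
      have hM0 : X.M 0 z' y' = 0 := X.M0_offdiag hzy
      rcases X.e01 1 z' y' with k1 | k1
      · rcases X.e01 2 z' y' with k2 | k2
        · rcases X.e01 u z' y' with ku | ku
          · omega
          · rw [hbP u z' y' hu0 ku, hbu]
        · rw [hbP 2 z' y' (by decide) k2, hb2]
      · rw [hbP 1 z' y' (by decide) k1, hb1]
  -- the radical identity for M w
  have hPMw : P * X.M w = n' • X.M w := by
    ext x y
    rw [Matrix.mul_apply, Matrix.smul_apply, smul_eq_mul]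
    rcases X.e01 w x y with k | k
    · rw [k, mul_zero]
      apply Finset.sum_eq_zero
      intro z' _
      rcases hP01 x z' with hp | hp
      · rw [hp]; ring
      rcases X.e01 w z' y with hq | hq
      · rw [hq]; ring
      exfalso
      have hPzy' : P z' y = b w := hbP w z' y hw0 hq
      have hPxy : P x y = 1 := hPoff1 x y k
      have hPz'x : P z' x = 1 := by rw [equiv_symm_apply hPsymm]; exact hp
      have := equiv_trans hP01 hPsq hPz'x hPxy
      rw [hPzy', hbw] at this
      omega
    · rw [k, mul_one]
      have hPxy : P x y = 0 := by rw [hbP w x y hw0 k, hbw]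
      have hterm : ∀ z', P x z' * X.M w z' y = P x z' := by
        intro z'
        rcases hP01 x z' with hp | hp
        · rw [hp]; ring
        · rcases X.e01 w z' y with hq | hq
          · exfalso
            have hPzy' : P z' y = 1 := hPoff1 z' y hq
            have := equiv_trans hP01 hPsq hp hPzy'
            omega
          · rw [hp, hq]; ring
      rw [Finset.sum_congr rfl (fun z' _ => hterm z'), hrowP x]
  -- apply the radical condition
  have hwmem : w ∈ ({3, 4} : Finset (Fin 5)) := by
    rcases hw with rfl | rfl <;> decide
  have hT1 : (1 : Fin 5) ∉ ({2, u} : Finset (Fin 5)) := by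
    rcases hu with rfl | rfl <;> decide
  have hT2 : (2 : Fin 5) ∉ ({u} : Finset (Fin 5)) := by
    rcases hu with rfl | rfl <;> decide
  have hsumT : ∑ t ∈ ({1, 2, u} : Finset (Fin 5)), X.M t
      = X.M 1 + (X.M 2 + X.M u) := by
    rw [show ({1, 2, u} : Finset (Fin 5)) = insert 1 (insert 2 {u}) from rfl,
      Finset.sum_insert hT1, Finset.sum_insert hT2, Finset.sum_singleton]
  have hcT : ∑ t ∈ ({1, 2, u} : Finset (Fin 5)), (X.c t t 0 : ℤ)
      = (X.c 1 1 0 : ℤ) + ((X.c 2 2 0 : ℤ) + (X.c u u 0 : ℤ)) := by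
    rw [show ({1, 2, u} : Finset (Fin 5)) = insert 1 (insert 2 {u}) from rfl,
      Finset.sum_insert hT1, Finset.sum_insert hT2, Finset.sum_singleton]
  have hsubT : ({1, 2, u} : Finset (Fin 5)) ⊆ ({1, 2, 3, 4} : Finset (Fin 5)) := by
    rcases hu with rfl | rfl <;> decide
  refine X.radical w hwmem {1, 2, u} ⟨1, Finset.mem_insert_self 1 _⟩ hsubT ⟨?_, ?_⟩
  · rw [hsumT, hcT, ← hPE, hPsq, hn'val]
  · rw [hsumT, hcT, ← hPE, hPMw, hn'val]

end Split

section Pattern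

lemma ddg_pattern (a : Fin 5 → ℤ) (l1 l2 : ℤ) (P : Matrix V V ℤ) (n' : ℤ)
    (b : Fin 5 → ℤ)
    (hP01 : ∀ x y, P x y = 0 ∨ P x y = 1) (hPsymm : Pᵀ = P)
    (hPdiag : ∀ x, P x x = 1) (hPsq : P * P = n' • P)
    (hbP : ∀ t x y, t ≠ 0 → X.M t x y = 1 → P x y = b t)
    (hb01 : ∀ t, b t = 0 ∨ b t = 1)
    (hval : ∀ t : Fin 5, t ≠ 0 → a t = l1 * b t + l2 * (1 - b t)) :
    a 3 = a 4 ∧ (a 1 = a 2 ∨ a 2 = a 3) := by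
  have hb34 : b 3 = b 4 := by
    rcases hb01 3 with h3 | h3 <;> rcases hb01 4 with h4 | h4
    · rw [h3, h4]
    · exact absurd (X.split_con 4 3 (Or.inr ⟨rfl, rfl⟩) hP01 hPsymm hPdiag hPsq hbP h4 h3)
        not_false
    · exact absurd (X.split_con 3 4 (Or.inl ⟨rfl, rfl⟩) hP01 hPsymm hPdiag hPsq hbP h3 h4)
        not_false
    · rw [h3, h4]
  refine ⟨by rw [hval 3 (by decide), hval 4 (by decide), hb34], ?_⟩
  rcases hb01 1 with h1 | h1 <;> rcases hb01 2 with h2 | h2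
  · left; rw [hval 1 (by decide), hval 2 (by decide), h1, h2]
  · exfalso
    have := X.alpha_con hP01 hPsymm hPsq hbP h2
    omega
  · rcases hb01 3 with h3 | h3
    · right; rw [hval 2 (by decide), hval 3 (by decide), h2, h3]
    · exfalso
      have h4 : b 4 = 1 := by omega
      exact X.gamma_con hP01 hPsymm hPsq hbP h2 h3 h4
  · left; rw [hval 1 (by decide), hval 2 (by decide), h1, h2]

end Pattern

section FinalArith

lemma scc1 (i j : Fin 5) (hij : (i = 3 ∧ j = 4) ∨ (i = 4 ∧ j = 3)) :
    (X.c i i 2 : ℤ) * ((X.c 3 3 0 : ℤ) + (X.c 4 4 0 : ℤ))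
      = (X.c i i 0 : ℤ) * (X.c i i 0 : ℤ) := by
  have hn2 : (X.c 2 2 0 : ℤ) ≠ 0 := by have := X.npos 2; omega
  apply mul_left_cancel₀ hn2
  linear_combination ((X.c 3 3 0 : ℤ) + (X.c 4 4 0 : ℤ)) * X.cD2 i j hij
    + (X.c i i 0 : ℤ) * X.eps_row i j hij

lemma final_prod1 (i j : Fin 5) (hij : (i = 3 ∧ j = 4) ∨ (i = 4 ∧ j = 3))
    (hEq : (X.c i i 2 : ℤ) = (X.c i i 1 : ℤ) + 1 + (X.c 1 1 0 : ℤ)) :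
    (X.c 3 3 0 : ℤ) * (X.c 4 4 0 : ℤ)
      = (X.c 1 1 0 : ℤ) * ((X.c 1 1 0 : ℤ) + 1) * ((X.c 3 3 0 : ℤ) + (X.c 4 4 0 : ℤ)) := by
  have hs := X.scc1 i j hij
  have hD1 := X.cD1 i j hij
  have hg := X.g_row i j hij
  have key : (X.c i i 0 : ℤ) * ((X.c 3 3 0 : ℤ) + (X.c 4 4 0 : ℤ))
      - (X.c i i 0 : ℤ) * (X.c i i 0 : ℤ)
      = (1 + (X.c 1 1 0 : ℤ)) * (X.c 1 1 0 : ℤ) * ((X.c 3 3 0 : ℤ) + (X.c 4 4 0 : ℤ)) := by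
    linear_combination ((X.c 1 1 0 : ℤ) * ((X.c 3 3 0 : ℤ) + (X.c 4 4 0 : ℤ))) * hEq
      - (X.c 1 1 0 : ℤ) * hs
      + ((X.c 3 3 0 : ℤ) + (X.c 4 4 0 : ℤ)) * hD1
      + (X.c i i 0 : ℤ) * hg
  rcases hij with ⟨rfl, rfl⟩ | ⟨rfl, rfl⟩ <;> linear_combination key

lemma final_prod2 (i j : Fin 5) (hij : (i = 3 ∧ j = 4) ∨ (i = 4 ∧ j = 3))
    (hEq34 : (X.c i i 3 : ℤ) = (X.c i i 4 : ℤ))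
    (hEq : (X.c 2 2 0 : ℤ) - 1 - (X.c 1 1 0 : ℤ) + (X.c i i 2 : ℤ)
      = 2 * (X.c 2 i j : ℤ) + (X.c i i 3 : ℤ)) :
    ((X.c 2 2 0 : ℤ) - 1 - (X.c 1 1 0 : ℤ)) * (X.c j j 0 : ℤ)
      = 2 * (1 + (X.c 1 1 0 : ℤ)) * (X.c i i 0 : ℤ) := by
  set σ : ℤ := (X.c 3 3 0 : ℤ) + (X.c 4 4 0 : ℤ) with hσ
  have hs1 := X.scc1 i j hij
  have hD1 := X.cD1 i j hij
  have hD2 := X.cD2 i j hij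
  have hg := X.g_row i j hij
  have he := X.eps_row i j hij
  have hrow := X.Mi_sq_row i
  -- s2 : cii1*n1*σ = (1+n1)*ni*ni − ni*σ
  have s2 : (X.c i i 1 : ℤ) * (X.c 1 1 0 : ℤ) * σ
      = (1 + (X.c 1 1 0 : ℤ)) * (X.c i i 0 : ℤ) * (X.c i i 0 : ℤ)
        - (X.c i i 0 : ℤ) * σ := by
    linear_combination σ * hD1 + (X.c i i 0 : ℤ) * hg
  -- s5 : cii2*n2*σ = n2*ni*ni
  have s5 : (X.c i i 2 : ℤ) * (X.c 2 2 0 : ℤ) * σ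
      = (X.c 2 2 0 : ℤ) * (X.c i i 0 : ℤ) * (X.c i i 0 : ℤ) := by
    linear_combination σ * hD2 + (X.c i i 0 : ℤ) * he
  -- s3 : cii3*σ = ni² − ni − cii1*n1 − cii2*n2
  have s3 : (X.c i i 3 : ℤ) * σ
      = (X.c i i 0 : ℤ) * (X.c i i 0 : ℤ) - (X.c i i 0 : ℤ)
        - (X.c i i 1 : ℤ) * (X.c 1 1 0 : ℤ) - (X.c i i 2 : ℤ) * (X.c 2 2 0 : ℤ) := by
    linear_combination (-1 : ℤ) * hrow + (X.c 4 4 0 : ℤ) * hEq34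
  -- s4 : cii3*σ*σ
  have s4 : (X.c i i 3 : ℤ) * σ * σ
      = (X.c i i 0 : ℤ) * (X.c i i 0 : ℤ) * σ
        - (1 + (X.c 1 1 0 : ℤ)) * (X.c i i 0 : ℤ) * (X.c i i 0 : ℤ)
        - (X.c 2 2 0 : ℤ) * (X.c i i 0 : ℤ) * (X.c i i 0 : ℤ) := by
    linear_combination σ * s3 - s2 - s5
  -- s6 : the master quadratic
  have s6 : ((X.c 2 2 0 : ℤ) - 1 - (X.c 1 1 0 : ℤ)) * σ * σ
      - 2 * (X.c 2 2 0 : ℤ) * (X.c i i 0 : ℤ) * σ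
      + (1 + (X.c 1 1 0 : ℤ) + (X.c 2 2 0 : ℤ)) * (X.c i i 0 : ℤ) * (X.c i i 0 : ℤ)
      = 0 := by
    have hεσ : (X.c 2 i j : ℤ) * σ = (X.c 2 2 0 : ℤ) * (X.c i i 0 : ℤ) := he
    linear_combination σ * σ * hEq - σ * hs1 + 2 * σ * hεσ + s4
  have hF : (X.c j j 0 : ℤ) * (((X.c 2 2 0 : ℤ) - 1 - (X.c 1 1 0 : ℤ)) * (X.c j j 0 : ℤ)
      - 2 * (1 + (X.c 1 1 0 : ℤ)) * (X.c i i 0 : ℤ)) = 0 := by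
    rcases hij with ⟨rfl, rfl⟩ | ⟨rfl, rfl⟩ <;>
      · rw [hσ] at s6
        linear_combination s6
  have hnj : (X.c j j 0 : ℤ) ≠ 0 := by have := X.npos j; omega
  have := (mul_eq_zero.mp hF).resolve_left hnj
  linarith

end FinalArith

section SDecomp

lemma S_decomp (i j : Fin 5) (hij : (i = 3 ∧ j = 4) ∨ (i = 4 ∧ j = 3)) :
    (X.M 2 + X.M i) * (X.M 2 + X.M i)
      = ((X.c 2 2 0 : ℤ) + (X.c i i 0 : ℤ)) • (1 : Matrix V V ℤ)
        + ((X.c 2 2 0 : ℤ) + (X.c i i 1 : ℤ)) • X.M 1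
        + ((X.c 2 2 0 : ℤ) - 1 - (X.c 1 1 0 : ℤ) + (X.c i i 2 : ℤ)) • X.M 2
        + (2 * (X.c 2 i j : ℤ) + (X.c i i 3 : ℤ)) • X.M 3
        + (2 * (X.c 2 i j : ℤ) + (X.c i i 4 : ℤ)) • X.M 4 := by
  have h1 : (X.M 2 + X.M i) * (X.M 2 + X.M i)
      = X.M 2 * X.M 2 + X.M 2 * X.M i + X.M i * X.M 2 + X.M i * X.M i := by
    rw [add_mul, mul_add, mul_add]; abel
  rw [h1, mul_comm_hi X 2 i (by simp) (ij34 hij).1, X.M2_sq, X.M2_mul i j hij,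
    X.mul_M i i, Fin.sum_univ_five, X.M_zero]
  rcases hij with ⟨rfl, rfl⟩ | ⟨rfl, rfl⟩ <;>
    · simp only [smul_add, add_smul, sub_smul, mul_smul, one_smul]
      abel

end SDecomp

end HigmanianConfig

/-- if `M2 + Mi` (for a fixed `i ∈ {3,4}`) is the adjacency matrix of a
divisible design graph for some equal-class-size partition of `V`, then
`c(3,3,3) = c(3,3,4)` and Eq. (1) or Eq. (2) holds. -/
theorem higmanian_fusion_ddg_necessary {V : Type*} [Fintype V] [DecidableEq V]
    (X : HigmanianConfig V) (i j : Fin 5)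
    (hij : (i = 3 ∧ j = 4) ∨ (i = 4 ∧ j = 3))
    (hddg : ∃ (P : Matrix V V ℤ) (n' l1 l2 : ℕ),
      Pᵀ = P ∧
      (∀ x y, P x y = 0 ∨ P x y = 1) ∧
      (∀ x, P x x = 1) ∧
      P * P = (n' : ℤ) • P ∧
      (X.M 2 + X.M i) * (X.M 2 + X.M i)
          = ((X.n 2 + X.n i : ℕ) : ℤ) • (1 : Matrix V V ℤ)
            + (l1 : ℤ) • (P - 1)
            + (l2 : ℤ) • ((Matrix.of fun _ _ => (1 : ℤ)) - P)) :
    X.c 3 3 3 = X.c 3 3 4 ∧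
    (1 / (X.n 3 : ℚ) + 1 / (X.n 4 : ℚ)
        = 1 / (X.n 1 : ℚ) - 1 / ((X.n 1 : ℚ) + 1) ∨
      (X.n 2 : ℚ) / ((X.n 1 : ℚ) + 1) - 2 * (X.n i : ℚ) / (X.n j : ℚ) = 1) := by
  classical
  obtain ⟨P, n', l1, l2, hPsymm, hP01, hPdiag, hPsq, hS⟩ := hddg
  have hcast : ((X.n 2 + X.n i : ℕ) : ℤ) = (X.c 2 2 0 : ℤ) + (X.c i i 0 : ℤ) := by
    simp only [HigmanianConfig.n]; push_cast; ring
  rw [hcast] at hS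
  have hMat := (X.S_decomp i j hij).symm.trans hS
  set a : Fin 5 → ℤ :=
    ![0, (X.c 2 2 0 : ℤ) + (X.c i i 1 : ℤ),
      (X.c 2 2 0 : ℤ) - 1 - (X.c 1 1 0 : ℤ) + (X.c i i 2 : ℤ),
      2 * (X.c 2 i j : ℤ) + (X.c i i 3 : ℤ),
      2 * (X.c 2 i j : ℤ) + (X.c i i 4 : ℤ)] with hadef
  have ha1 : a 1 = (X.c 2 2 0 : ℤ) + (X.c i i 1 : ℤ) := rfl
  have ha2 : a 2 = (X.c 2 2 0 : ℤ) - 1 - (X.c 1 1 0 : ℤ) + (X.c i i 2 : ℤ) := rfl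
  have ha3 : a 3 = 2 * (X.c 2 i j : ℤ) + (X.c i i 3 : ℤ) := rfl
  have ha4 : a 4 = 2 * (X.c 2 i j : ℤ) + (X.c i i 4 : ℤ) := rfl
  have hfive : ∀ s : Fin 5, s = 0 ∨ s = 1 ∨ s = 2 ∨ s = 3 ∨ s = 4 := by decide
  have hEV : ∀ (t : Fin 5) (x y : V), t ≠ 0 → X.M t x y = 1 →
      a t = (l1 : ℤ) * P x y + (l2 : ℤ) * (1 - P x y) := by
    intro t x y ht h1
    have hxy : x ≠ y := X.ne_of_entry ht h1
    have heq := congrFun (congrFun hMat x) y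
    simp only [Matrix.add_apply, Matrix.sub_apply, Matrix.smul_apply, smul_eq_mul,
      Matrix.of_apply, Matrix.one_apply_ne hxy, mul_zero, sub_zero, add_zero,
      zero_add] at heq
    rcases hfive t with rfl | rfl | rfl | rfl | rfl
    · exact absurd rfl ht
    · rw [h1, X.disj h1 (by decide : (2:Fin 5) ≠ 1), X.disj h1 (by decide : (3:Fin 5) ≠ 1),
        X.disj h1 (by decide : (4:Fin 5) ≠ 1)] at heq
      rw [ha1]; linarith [heq]
    · rw [h1, X.disj h1 (by decide : (1:Fin 5) ≠ 2), X.disj h1 (by decide : (3:Fin 5) ≠ 2),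
        X.disj h1 (by decide : (4:Fin 5) ≠ 2)] at heq
      rw [ha2]; linarith [heq]
    · rw [h1, X.disj h1 (by decide : (1:Fin 5) ≠ 3), X.disj h1 (by decide : (2:Fin 5) ≠ 3),
        X.disj h1 (by decide : (4:Fin 5) ≠ 3)] at heq
      rw [ha3]; linarith [heq]
    · rw [h1, X.disj h1 (by decide : (1:Fin 5) ≠ 4), X.disj h1 (by decide : (2:Fin 5) ≠ 4),
        X.disj h1 (by decide : (3:Fin 5) ≠ 4)] at heq
      rw [ha4]; linarith [heq]
  obtain ⟨x1, y1, hw1⟩ := X.exists_pair 1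
  obtain ⟨x2, y2, hw2⟩ := X.exists_pair 2
  obtain ⟨x3, y3, hw3⟩ := X.exists_pair 3
  obtain ⟨x4, y4, hw4⟩ := X.exists_pair 4
  have hkey : a 3 = a 4 ∧ (a 1 = a 2 ∨ a 2 = a 3) := by
    by_cases hl : (l1 : ℤ) = (l2 : ℤ)
    · have hv : ∀ (t : Fin 5) (x y : V), t ≠ 0 → X.M t x y = 1 → a t = (l2 : ℤ) := by
        intro t x y ht h1
        have e := hEV t x y ht h1
        linear_combination e + P x y * hl
      exact ⟨by rw [hv 3 x3 y3 (by decide) hw3, hv 4 x4 y4 (by decide) hw4],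
        Or.inl (by rw [hv 1 x1 y1 (by decide) hw1, hv 2 x2 y2 (by decide) hw2])⟩
    · set b : Fin 5 → ℤ := ![1, P x1 y1, P x2 y2, P x3 y3, P x4 y4] with hbdef
      have hb1 : b 1 = P x1 y1 := rfl
      have hb2 : b 2 = P x2 y2 := rfl
      have hb3 : b 3 = P x3 y3 := rfl
      have hb4 : b 4 = P x4 y4 := rfl
      have hb01 : ∀ t, b t = 0 ∨ b t = 1 := by
        intro t
        rcases hfive t with rfl | rfl | rfl | rfl | rfl
        · right; rfl
        · rw [hb1]; exact hP01 x1 y1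
        · rw [hb2]; exact hP01 x2 y2
        · rw [hb3]; exact hP01 x3 y3
        · rw [hb4]; exact hP01 x4 y4
      have hbP : ∀ (t : Fin 5) (x y : V), t ≠ 0 → X.M t x y = 1 → P x y = b t := by
        intro t x y ht h1
        have e1 := hEV t x y ht h1
        have step : ∀ (x' y' : V), X.M t x' y' = 1 → P x y = P x' y' := by
          intro x' y' h2
          have e2 := hEV t x' y' ht h2
          have h0 : ((l1 : ℤ) - (l2 : ℤ)) * (P x y - P x' y') = 0 := by
            linarith [e1, e2]
          have := (mul_eq_zero.mp h0).resolve_left (sub_ne_zero.mpr hl)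
          exact sub_eq_zero.mp this
        rcases hfive t with rfl | rfl | rfl | rfl | rfl
        · exact absurd rfl ht
        · rw [hb1]; exact step x1 y1 hw1
        · rw [hb2]; exact step x2 y2 hw2
        · rw [hb3]; exact step x3 y3 hw3
        · rw [hb4]; exact step x4 y4 hw4
      have hvalb : ∀ t : Fin 5, t ≠ 0 → a t = (l1 : ℤ) * b t + (l2 : ℤ) * (1 - b t) := by
        intro t ht
        rcases hfive t with rfl | rfl | rfl | rfl | rfl
        · exact absurd rfl ht
        · rw [hb1]; exact hEV 1 x1 y1 (by decide) hw1
        · rw [hb2]; exact hEV 2 x2 y2 (by decide) hw2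
        · rw [hb3]; exact hEV 3 x3 y3 (by decide) hw3
        · rw [hb4]; exact hEV 4 x4 y4 (by decide) hw4
      exact X.ddg_pattern a l1 l2 P n' b hP01 hPsymm hPdiag hPsq hbP hb01 hvalb
  have hc34 : (X.c i i 3 : ℤ) = (X.c i i 4 : ℤ) := by
    have h := hkey.1
    rw [ha3, ha4] at h
    linarith
  constructor
  · rcases hij with ⟨rfl, rfl⟩ | ⟨rfl, rfl⟩
    · exact_mod_cast hc34
    · exact_mod_cast X.transfer hc34
  · have hq1 : (0 : ℚ) < (X.n 1 : ℚ) := by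
      have := X.npos 1; simp only [HigmanianConfig.n]; exact_mod_cast this
    have hq2 : (0 : ℚ) < (X.n 2 : ℚ) := by
      have := X.npos 2; simp only [HigmanianConfig.n]; exact_mod_cast this
    have hq3 : (0 : ℚ) < (X.n 3 : ℚ) := by
      have := X.npos 3; simp only [HigmanianConfig.n]; exact_mod_cast this
    have hq4 : (0 : ℚ) < (X.n 4 : ℚ) := by
      have := X.npos 4; simp only [HigmanianConfig.n]; exact_mod_cast this
    rcases hkey.2 with h12 | h23
    · left
      rw [ha1, ha2] at h12
      have hEq : (X.c i i 2 : ℤ) = (X.c i i 1 : ℤ) + 1 + (X.c 1 1 0 : ℤ) := by linarith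
      have hprod := X.final_prod1 i j hij hEq
      have hQ : (X.n 3 : ℚ) * (X.n 4 : ℚ)
          = (X.n 1 : ℚ) * ((X.n 1 : ℚ) + 1) * ((X.n 3 : ℚ) + (X.n 4 : ℚ)) := by
        simp only [HigmanianConfig.n]
        exact_mod_cast hprod
      have h3 : (X.n 3 : ℚ) ≠ 0 := ne_of_gt hq3
      have h4 : (X.n 4 : ℚ) ≠ 0 := ne_of_gt hq4
      have h1 : (X.n 1 : ℚ) ≠ 0 := ne_of_gt hq1
      have h1' : (X.n 1 : ℚ) + 1 ≠ 0 := by positivity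
      field_simp
      linear_combination (-1 : ℚ) * hQ
    · right
      rw [ha2, ha3] at h23
      have ht := X.final_prod2 i j hij hc34 h23
      have htQ : ((X.n 2 : ℚ) - 1 - (X.n 1 : ℚ)) * (X.n j : ℚ)
          = 2 * (1 + (X.n 1 : ℚ)) * (X.n i : ℚ) := by
        simp only [HigmanianConfig.n]
        exact_mod_cast ht
      have hqi : (0 : ℚ) < (X.n i : ℚ) := by
        have := X.npos i; simp only [HigmanianConfig.n]; exact_mod_cast this
      have hqj : (0 : ℚ) < (X.n j : ℚ) := by
        have := X.npos j; simp only [HigmanianConfig.n]; exact_mod_cast this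
      have hj0 : (X.n j : ℚ) ≠ 0 := ne_of_gt hqj
      have h1' : (X.n 1 : ℚ) + 1 ≠ 0 := by positivity
      field_simp
      linear_combination htQ
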